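/- Let σ > 0 and v : ℝᵈ × ℝ → ℝᵈ. Suppose x : (0, 1) → ℝᵈ is differentiable and satisfies the flow-matching probability flow ODE x′(s) = v(x(s), s) for all s ∈ (0, 1). For t ∈ (0, π/2) define s(t) = sin t / (sin t + cos t) and y(t) = σ·(sin t + cos t)·x(s(t)). Then y is differentiable on (0, π/2) and satisfies the TrigFlow probability flow ODE y′(t) = σ·F̂(y(t)/σ, t), where, writing s = s(t) and x_s = (y(t)/σ)·√(s² + (1 − s)²), F̂(y(t)/σ, t) = (1/√(s² + (1 − s)²)) · [ (1 − 2s)·x_s + (1 − 2s + 2s²)·v(x_s, s) ]. In other words, the training-free transformation of a flow-matching model into a TrigFlow model maps solution trajectories of the flow-matching ODE to solution trajectories of the TrigFlow ODE, so sampling is lossless. -/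

import Mathlib

open Real

/-- The training-free transformation of a flow-matching model into a TrigFlow model maps
solution trajectories of the flow-matching probability flow ODE `x′(s) = v(x(s), s)` on
`(0, 1)` to solution trajectories of the TrigFlow probability flow ODE
`y′(t) = σ·F̂(y(t)/σ, t)` on `(0, π/2)`, where `y(t) = σ·(sin t + cos t)·x(s(t))`,
`s(t) = sin t/(sin t + cos t)`, `x_s = (y(t)/σ)·√(s² + (1 − s)²)`, and
`F̂(y(t)/σ, t) = (1/√(s² + (1 − s)²))·[(1 − 2s)·x_s + (1 − 2s + 2s²)·v(x_s, s)]`. -/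
theorem trigflow_ode_of_flow_ode {d : ℕ} (σ : ℝ) (hσ : 0 < σ)
    (v : EuclideanSpace ℝ (Fin d) × ℝ → EuclideanSpace ℝ (Fin d))
    (x : ℝ → EuclideanSpace ℝ (Fin d))
    (hx : ∀ s ∈ Set.Ioo (0 : ℝ) 1, HasDerivAt x (v (x s, s)) s)
    (sfun : ℝ → ℝ) (hsfun : sfun = fun t => sin t / (sin t + cos t))
    (y : ℝ → EuclideanSpace ℝ (Fin d))
    (hy : y = fun t => (σ * (sin t + cos t)) • x (sfun t)) :
    ∀ t ∈ Set.Ioo 0 (π / 2),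
      HasDerivAt y
        (σ • ((1 / Real.sqrt ((sfun t) ^ 2 + (1 - sfun t) ^ 2)) •
          ((1 - 2 * sfun t) •
              (Real.sqrt ((sfun t) ^ 2 + (1 - sfun t) ^ 2) • ((1 / σ) • y t)) +
            (1 - 2 * sfun t + 2 * (sfun t) ^ 2) •
              v (Real.sqrt ((sfun t) ^ 2 + (1 - sfun t) ^ 2) • ((1 / σ) • y t), sfun t))))
        t := by
  rintro t ⟨ht0, ht1⟩
  have hsin : 0 < sin t := sin_pos_of_pos_of_lt_pi ht0 (by linarith [pi_pos])
  have hcos : 0 < cos t := cos_pos_of_mem_Ioo ⟨by linarith [pi_pos], ht1⟩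
  have hpyth := sin_sq_add_cos_sq t
  set c := sin t + cos t with hc
  have hcpos : 0 < c := by positivity
  have hs : sfun t = sin t / c := by rw [hsfun]
  have hs0 : 0 < sfun t := by rw [hs]; positivity
  have hs1 : sfun t < 1 := by rw [hs, div_lt_one hcpos]; linarith
  have hds : HasDerivAt sfun (1 / c ^ 2) t := by
    rw [hsfun]
    have h2 : HasDerivAt (fun t => sin t + cos t) (cos t - sin t) t := by
      exact ((hasDerivAt_sin t).add (hasDerivAt_cos t)).congr_deriv (by ring)
    have := (hasDerivAt_sin t).div h2 (ne_of_gt hcpos)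
    refine this.congr_deriv ?_
    rw [hc]
    field_simp
    nlinarith [hpyth]
  have hcomp : HasDerivAt (fun u => x (sfun u)) ((1 / c ^ 2) • v (x (sfun t), sfun t)) t :=
    (hx (sfun t) ⟨hs0, hs1⟩).scomp t hds
  have hcoef : HasDerivAt (fun u => σ * (sin u + cos u)) (σ * (cos t - sin t)) t := by
    have h2 : HasDerivAt (fun u => sin u + cos u) (cos t - sin t) t := by
      exact ((hasDerivAt_sin t).add (hasDerivAt_cos t)).congr_deriv (by ring)
    simpa using h2.const_mul σ
  have hy' : HasDerivAt y
      ((σ * (cos t - sin t)) • x (sfun t) +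
        (σ * c) • ((1 / c ^ 2) • v (x (sfun t), sfun t))) t := by
    rw [hy]
    have := hcoef.smul hcomp
    refine this.congr_deriv ?_
    module
  have hQ : (sfun t) ^ 2 + (1 - sfun t) ^ 2 = 1 / c ^ 2 := by
    rw [hs]; field_simp; nlinarith [hpyth]
  have hsqrt : Real.sqrt ((sfun t) ^ 2 + (1 - sfun t) ^ 2) = 1 / c := by
    rw [hQ, one_div, one_div, Real.sqrt_inv, Real.sqrt_sq hcpos.le]
  have hyt : (1 / σ) • y t = c • x (sfun t) := by
    rw [hy]
    rw [smul_smul]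
    congr 1
    field_simp
    exact hc.symm
  have harg : Real.sqrt ((sfun t) ^ 2 + (1 - sfun t) ^ 2) • ((1 / σ) • y t) = x (sfun t) := by
    rw [hsqrt, hyt, smul_smul]
    field_simp
    exact one_smul _ _
  rw [harg, hsqrt]
  convert hy' using 1
  rw [hs]
  match_scalars
  · rw [hc]; field_simp
    ring
  · rw [hc]; field_simp
    linear_combination hpyth
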